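/- Let A ∈ ℂ^{m×n} with m ≥ n be injective, with entries A_{k,i} = xₖ^{dᵢ}, and let λ = d − δ(n), λ[i] = d⟨i⟩ − δ(n−1). For j ≠ i (indices in {1,…,n}), the (j,i) minor M_{ji} of A*A (the determinant of the (n−1)×(n−1) matrix obtained by deleting row j and column i from A*A) satisfies M_{ji} = ∑_{l ∈ C([m],n−1)} s_{λ[i]}(x_l) · conj(s_{λ[j]}(x_l)) · |V(x_l)|². -/

import Mathlib

open scoped BigOperators ComplexConjugate Matrix

/-- Vandermonde product `V(z) = ∏_{i<j} (z_i − z_j)`. -/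
noncomputable def vand {n : ℕ} (z : Fin n → ℂ) : ℂ :=
  ∏ i : Fin n, ∏ j ∈ Finset.Ioi i, (z i - z j)

/-- Schur polynomial `s_λ(z) = det(z_i^{λ_j + n−1−j}) / V(z)` (junk value 0 if `V(z)=0`). -/
noncomputable def schur {n : ℕ} (lam : Fin n → ℕ) (z : Fin n → ℂ) : ℂ :=
  Matrix.det (Matrix.of fun i j : Fin n => z i ^ (lam j + (n - 1 - (j : ℕ)))) / vand z

/-- The subvector of `x` indexed by an `n`-element subset of `Fin m` (in increasing order). -/
def subvec {m n : ℕ} (x : Fin m → ℂ) (s : {t : Finset (Fin m) // t.card = n}) :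
    Fin n → ℂ := fun i => x (s.1.orderEmbOfFin s.2 i)

section CauchyBinet

variable {R : Type*} [CommRing R] {n m : ℕ}

lemma det_mul_expand (C : Matrix (Fin n) (Fin m) R) (B : Matrix (Fin m) (Fin n) R) :
    (C * B).det = ∑ f : Fin n → Fin m, (∏ a, C a (f a)) * (B.submatrix f id).det := by
  have h1 : C * B = Matrix.of fun a => ∑ k : Fin m, C a k • B k := by
    ext a b; simp [Matrix.mul_apply, Finset.sum_apply]
  rw [h1]
  have h2 := (Matrix.detRowAlternating :
      (Fin n → R) [⋀^Fin n]→ₗ[R] R).toMultilinearMap.map_sum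
      (g := fun a k => C a k • B k)
  have h3 : (Matrix.of fun a => ∑ k : Fin m, C a k • B k).det
      = ∑ f : Fin n → Fin m, (Matrix.detRowAlternating :
        (Fin n → R) [⋀^Fin n]→ₗ[R] R) (fun a => C a (f a) • B (f a)) := h2
  rw [h3]
  refine Finset.sum_congr rfl fun f _ => ?_
  have h4 := (Matrix.detRowAlternating :
      (Fin n → R) [⋀^Fin n]→ₗ[R] R).toMultilinearMap.map_smul_univ
      (fun a => C a (f a)) (fun a => B (f a))
  calc (Matrix.detRowAlternating : (Fin n → R) [⋀^Fin n]→ₗ[R] R) (fun a => C a (f a) • B (f a))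
      = (∏ a : Fin n, C a (f a)) • (Matrix.detRowAlternating :
        (Fin n → R) [⋀^Fin n]→ₗ[R] R) (fun a => B (f a)) := h4
    _ = (∏ a, C a (f a)) * (B.submatrix f id).det := by rw [smul_eq_mul]; rfl

lemma image_emb_perm {m k : ℕ} (t : Finset (Fin m)) (h : t.card = k) (σ : Equiv.Perm (Fin k)) :
    Finset.image (fun a => t.orderEmbOfFin h (σ a)) Finset.univ = t := by
  apply Finset.coe_injective
  rw [Finset.coe_image, Finset.coe_univ, Set.image_univ]
  rw [show (fun a => t.orderEmbOfFin h (σ a)) = (t.orderEmbOfFin h) ∘ σ from rfl]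
  rw [Set.range_comp, Equiv.range_eq_univ, Set.image_univ, Finset.range_orderEmbOfFin]

lemma cauchy_binet (C : Matrix (Fin n) (Fin m) R) (B : Matrix (Fin m) (Fin n) R) :
    (C * B).det = ∑ s : {t : Finset (Fin m) // t.card = n},
      (C.submatrix id (s.1.orderEmbOfFin s.2)).det *
      (B.submatrix (s.1.orderEmbOfFin s.2) id).det := by
  classical
  rw [det_mul_expand]
  -- drop non-injective f
  rw [← Finset.sum_filter_of_ne (p := fun f : Fin n → Fin m => Function.Injective f)
    (by
      intro f _ hne
      by_contra hni
      apply hne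
      obtain ⟨a, b, hab, hne'⟩ : ∃ a b, f a = f b ∧ a ≠ b := by
        simp only [Function.Injective, not_forall] at hni
        obtain ⟨a, b, h1, h2⟩ := hni; exact ⟨a, b, h1, h2⟩
      rw [Matrix.det_zero_of_row_eq hne' (by ext c; simp [Matrix.submatrix, hab]), mul_zero])]
  -- RHS : expand each det (C.submatrix id e) via det_apply'
  have hR : ∀ s : {t : Finset (Fin m) // t.card = n},
      (C.submatrix id (s.1.orderEmbOfFin s.2)).det *
      (B.submatrix (s.1.orderEmbOfFin s.2) id).det
      = ∑ σ : Equiv.Perm (Fin n),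
        (∏ a, C a (s.1.orderEmbOfFin s.2 (σ a))) *
        (B.submatrix (fun a => s.1.orderEmbOfFin s.2 (σ a)) id).det := by
    intro s
    set e := s.1.orderEmbOfFin s.2
    have h1 : (C.submatrix id e).det = ∑ σ : Equiv.Perm (Fin n),
        (Equiv.Perm.sign σ : ℤ) * ∏ a, C a (e (σ a)) := by
      rw [← Matrix.det_transpose, Matrix.det_apply']
      refine Finset.sum_congr rfl fun σ _ => ?_
      simp [Matrix.transpose_apply, Matrix.submatrix]
    rw [h1, Finset.sum_mul]
    refine Finset.sum_congr rfl fun σ _ => ?_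
    have h2 : (B.submatrix (fun a => e (σ a)) id) = (B.submatrix e id).submatrix σ id := by
      ext a b; simp [Matrix.submatrix]
    rw [h2, Matrix.det_permute]
    ring
  simp_rw [hR]
  rw [← Finset.sum_product']
  -- bijection between pairs (s, σ) and injective functions
  symm
  refine Finset.sum_bij
    (fun (p : {t : Finset (Fin m) // t.card = n} × Equiv.Perm (Fin n)) _ =>
      fun a => p.1.1.orderEmbOfFin p.1.2 (p.2 a)) ?_ ?_ ?_ ?_
  · intro p _
    simp only [Finset.mem_filter, Finset.mem_univ, true_and]
    exact fun a b hab => p.2.injective ((p.1.1.orderEmbOfFin p.1.2).injective hab)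
  · intro p1 hm1 p2 hm2 hfe
    obtain ⟨⟨t₁, h₁⟩, σ₁⟩ := p1
    obtain ⟨⟨t₂, h₂⟩, σ₂⟩ := p2
    simp only at hfe
    have him : t₁ = t₂ := by
      rw [← image_emb_perm t₁ h₁ σ₁, ← image_emb_perm t₂ h₂ σ₂, hfe]
    subst him
    have hσ : σ₁ = σ₂ := by
      ext a
      have h5 := congrFun hfe a
      exact congrArg Fin.val ((t₁.orderEmbOfFin h₁).injective h5)
    simp [hσ]
  · intro f hf
    simp only [Finset.mem_filter, Finset.mem_univ, true_and] at hf
    set t : Finset (Fin m) := Finset.image f Finset.univ with ht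
    have hcard : t.card = n := by
      rw [ht, Finset.card_image_of_injective _ hf, Finset.card_univ, Fintype.card_fin]
    have hmem : ∀ a, f a ∈ t := fun a => Finset.mem_image_of_mem f (Finset.mem_univ a)
    set g : Fin n → Fin n := fun a => (t.orderIsoOfFin hcard).symm ⟨f a, hmem a⟩ with hg
    have hginj : Function.Injective g := by
      intro a b hab
      apply hf
      have := (t.orderIsoOfFin hcard).symm.injective hab
      exact congrArg Subtype.val this
    refine ⟨(⟨t, hcard⟩, Equiv.ofBijective g (Finite.injective_iff_bijective.mp hginj)),
      Finset.mem_univ _, ?_⟩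
    funext a
    show t.orderEmbOfFin hcard (g a) = f a
    rw [← Finset.coe_orderIsoOfFin_apply, hg]
    simp
  · intro p _
    rfl

end CauchyBinet

/-- The generalized Vandermonde determinant equals `schur * vand` (even when `vand = 0`). -/
lemma det_pow_eq_schur_mul_vand {k : ℕ} (lam : Fin k → ℕ) (z : Fin k → ℂ) :
    (Matrix.of fun a b : Fin k => z a ^ (lam b + (k - 1 - (b : ℕ)))).det
      = schur lam z * vand z := by
  by_cases h : vand z = 0
  · rw [h, mul_zero]
    obtain ⟨a, -, b, hb, hab⟩ : ∃ a ∈ Finset.univ, ∃ b ∈ Finset.Ioi a, z a - z b = 0 := by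
      have := h
      rw [vand, Finset.prod_eq_zero_iff] at this
      obtain ⟨a, ha, h2⟩ := this
      rw [Finset.prod_eq_zero_iff] at h2
      obtain ⟨b, hb, h3⟩ := h2
      exact ⟨a, ha, b, hb, h3⟩
    have hz : z a = z b := by linear_combination hab
    have hne : a ≠ b := (Finset.mem_Ioi.mp hb).ne
    refine Matrix.det_zero_of_row_eq hne ?_
    funext c
    simp [hz]
  · rw [schur, div_mul_cancel₀ _ h]

/-- A strictly antitone `d : Fin (N+1) → ℕ` satisfies `N - a ≤ d a`. -/
lemma strictAnti_ge {N : ℕ} {d : Fin (N + 1) → ℕ} (hd : StrictAnti d) (a : Fin (N + 1)) :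
    N - (a : ℕ) ≤ d a := by
  have h1 : (Finset.Ioi a).card = N + 1 - 1 - (a : ℕ) := Fin.card_Ioi a
  have h2 : (Finset.Ioi a).card ≤ (Finset.range (d a)).card := by
    apply Finset.card_le_card_of_injOn d
    · intro b hb
      rw [Finset.mem_coe, Finset.mem_range]
      exact hd (Finset.mem_Ioi.mp hb)
    · exact fun b _ c _ hbc => hd.injective hbc
  rw [h1, Finset.card_range] at h2
  omega

lemma succAbove_exp {N : ℕ} {d : Fin (N + 1) → ℕ} (hd : StrictAnti d)
    (p : Fin (N + 1)) (b : Fin N) :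
    (d (p.succAbove b) - (N - 1 - (b : ℕ))) + (N - 1 - (b : ℕ)) = d (p.succAbove b) := by
  have h1 := strictAnti_ge hd (p.succAbove b)
  have h2 : ((p.succAbove b : Fin (N + 1)) : ℕ) ≤ (b : ℕ) + 1 := by
    rcases Fin.lt_or_le (Fin.castSucc b) p with hc | hc
    · rw [Fin.succAbove_of_castSucc_lt _ _ hc]
      simp only [Fin.coe_castSucc]
      omega
    · rw [Fin.succAbove_of_le_castSucc _ _ hc]
      simp only [Fin.val_succ]
      omega
  have hb : (b : ℕ) < N := b.isLt
  omega

/-- the `(j,i)` minor of `A*A` (delete row `j`, column `i`) equals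
`∑_{l ∈ C([m],n−1)} s_{λ[i]}(x_l) conj(s_{λ[j]}(x_l)) |V(x_l)|²`, where `n = N+1`,
`λ[i] = d⟨i⟩ − δ(n−1)`. -/
theorem minor_eq_sum_schur (m N : ℕ) (hmn : N + 1 ≤ m)
    (d : Fin (N + 1) → ℕ) (hd : StrictAnti d) (x : Fin m → ℂ)
    (A : Matrix (Fin m) (Fin (N + 1)) ℂ) (hA : ∀ k i, A k i = x k ^ d i)
    (hinj : Function.Injective A.mulVec)
    (i j : Fin (N + 1)) (hij : j ≠ i) :
    ((Aᴴ * A).submatrix j.succAbove i.succAbove).det =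
      ∑ l : {t : Finset (Fin m) // t.card = N},
        schur (fun r : Fin N => d (i.succAbove r) - (N - 1 - (r : ℕ))) (subvec x l) *
          conj (schur (fun r : Fin N => d (j.succAbove r) - (N - 1 - (r : ℕ))) (subvec x l)) *
          ((‖vand (subvec x l)‖ : ℂ)) ^ 2 := by
  classical
  set Bi : Matrix (Fin m) (Fin N) ℂ := Matrix.of fun k r => x k ^ d (i.succAbove r) with hBi
  set Bj : Matrix (Fin m) (Fin N) ℂ := Matrix.of fun k r => x k ^ d (j.succAbove r) with hBj
  have hM : (Aᴴ * A).submatrix j.succAbove i.succAbove = Bjᴴ * Bi := by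
    ext r c
    simp [Matrix.mul_apply, Matrix.conjTranspose_apply, hA, hBi, hBj]
  rw [hM, cauchy_binet]
  refine Finset.sum_congr rfl fun s _ => ?_
  set e := s.1.orderEmbOfFin s.2 with he
  -- identify the two rectangular determinants
  have hBi' : Bi.submatrix (⇑e) id = Matrix.of fun a b : Fin N =>
      (subvec x s) a ^ ((d (i.succAbove b) - (N - 1 - (b : ℕ))) + (N - 1 - (b : ℕ))) := by
    ext a b
    simp only [Matrix.submatrix_apply, Matrix.of_apply, id, hBi]
    rw [succAbove_exp hd]
    rfl
  have hBj' : Bj.submatrix (⇑e) id = Matrix.of fun a b : Fin N =>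
      (subvec x s) a ^ ((d (j.succAbove b) - (N - 1 - (b : ℕ))) + (N - 1 - (b : ℕ))) := by
    ext a b
    simp only [Matrix.submatrix_apply, Matrix.of_apply, id, hBj]
    rw [succAbove_exp hd]
    rfl
  have hCT : (Bjᴴ).submatrix id (⇑e) = (Bj.submatrix (⇑e) id)ᴴ := by
    ext a b
    simp [Matrix.conjTranspose_apply]
  rw [hCT, Matrix.det_conjTranspose, hBi', hBj',
    det_pow_eq_schur_mul_vand, det_pow_eq_schur_mul_vand]
  have habs : ((‖vand (subvec x s)‖ : ℂ)) ^ 2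
      = vand (subvec x s) * conj (vand (subvec x s)) := by
    rw [← Complex.ofReal_pow, Complex.sq_norm, Complex.mul_conj]
  rw [habs]
  simp only [star_mul', Complex.star_def]
  ring
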